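/- Let X be a poset with least element ⊥, and let (s_{x,Y}) be a family of elements witnessing that X has a free skeleton. Then for every nonempty subset Y of max X, the subposet ↑s_{⊥,Y} (with the induced order) has a free skeleton. -/

import Mathlib

/-- The set of maximal elements of the subposet `S`. -/
def maxSet {X : Type*} [PartialOrder X] (S : Set X) : Set X :=
  {x | x ∈ S ∧ ∀ y ∈ S, x ≤ y → y = x}

/-- A weak p-morphism: an order preserving map such that for all `x` and all maximal `y`
above `p x` there is a maximal element `z` of `↑x` with `p z = y`. -/
def IsWeakPMorphism {X Y : Type*} [PartialOrder X] [PartialOrder Y] (p : X → Y) : Prop :=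
  Monotone p ∧
    ∀ x : X, ∀ y ∈ maxSet (Set.univ : Set Y), p x ≤ y →
      ∃ z ∈ maxSet (Set.Ici x), p z = y

/-- `s` is a witnessing family for a free skeleton on a poset with least element `bot`:
`s x Y` is the element `s_{x,Y}` (its value is only constrained when `Y` is a nonempty
subset of `max ↑x`). -/
def IsFreeSkeleton {X : Type*} [PartialOrder X] (bot : X) (s : X → Set X → X) : Prop :=
  (∀ (x : X) (Y : Set X), Y.Nonempty → Y ⊆ maxSet (Set.Ici x) →
      x ≤ s x Y ∧ Y = maxSet (Set.Ici (s x Y))) ∧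
  (∀ (x : X) (Y Z : Set X), Y.Nonempty → Z.Nonempty →
      Y ⊆ maxSet (Set.Ici x) → Z ⊆ maxSet (Set.Ici x) → Y ⊆ Z → s x Z ≤ s x Y) ∧
  (∀ (x : X) (Y : Set X), Y.Nonempty → Y ⊆ maxSet (Set.univ : Set X) →
      maxSet (Set.Ici x) ⊆ Y → s bot Y ≤ x)

/-- A poset has a free skeleton when it has a least element together with a witnessing
family `s_{x,Y}` as in `IsFreeSkeleton`. -/
def HasFreeSkeleton (X : Type*) [PartialOrder X] : Prop :=
  ∃ (bot : X) (s : X → Set X → X), IsBot bot ∧ IsFreeSkeleton bot s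

lemma maxSet_Ici_subset_maxSet_univ {X : Type*} [PartialOrder X] (a : X) :
    maxSet (Set.Ici a) ⊆ maxSet (Set.univ : Set X) := by
  rintro w ⟨hw, hmax⟩
  exact ⟨trivial, fun y _ hle => hmax y (le_trans hw hle) hle⟩

lemma mem_maxSet_Ici_subtype {X : Type*} [PartialOrder X] {b : X} (z w : Set.Ici b) :
    w ∈ maxSet (Set.Ici z) ↔ (w : X) ∈ maxSet (Set.Ici (z : X)) := by
  constructor
  · rintro ⟨h1, h2⟩
    refine ⟨h1, fun y hy hle => ?_⟩
    have hyb : y ∈ Set.Ici b := le_trans z.2 hy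
    exact congrArg Subtype.val (h2 ⟨y, hyb⟩ hy hle)
  · rintro ⟨h1, h2⟩
    exact ⟨h1, fun y hy hle => Subtype.ext (h2 y.1 hy hle)⟩

lemma mem_maxSet_univ_subtype {X : Type*} [PartialOrder X] {b : X} (w : Set.Ici b) :
    w ∈ maxSet (Set.univ : Set (Set.Ici b)) ↔ (w : X) ∈ maxSet (Set.Ici b) := by
  constructor
  · rintro ⟨-, h2⟩
    exact ⟨w.2, fun y hy hle => congrArg Subtype.val (h2 ⟨y, hy⟩ trivial hle)⟩
  · rintro ⟨h1, h2⟩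
    exact ⟨trivial, fun y _ hle => Subtype.ext (h2 y.1 y.2 hle)⟩

open Classical in
/-- The lifted skeleton family on `↑b`. -/
noncomputable def skelLift {X : Type*} [PartialOrder X] (bot : X) (s : X → Set X → X)
    (b : X) : Set.Ici b → Set (Set.Ici b) → Set.Ici b := fun z W =>
  if h : b ≤ (if (z : X) = b then s bot (Subtype.val '' W) else s (z : X) (Subtype.val '' W))
  then ⟨_, h⟩ else z

/-- If `X` is a poset with least element `bot` and the family `s` witnesses that `X` has a
free skeleton, then for every nonempty `Y ⊆ max X` the subposet `↑(s bot Y)` (with the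
induced order) has a free skeleton. -/
theorem hasFreeSkeleton_Ici_skeleton_element
    {X : Type*} [PartialOrder X] (bot : X) (hbot : IsBot bot)
    (s : X → Set X → X) (hs : IsFreeSkeleton bot s)
    (Y : Set X) (hY : Y.Nonempty) (hYmax : Y ⊆ maxSet (Set.univ : Set X)) :
    HasFreeSkeleton (Set.Ici (s bot Y)) := by
  classical
  obtain ⟨h1, h2, h3⟩ := hs
  set b := s bot Y with hbdef
  have hYbot : Y ⊆ maxSet (Set.Ici bot) := by
    intro y hy
    obtain ⟨-, hmax⟩ := hYmax hy
    exact ⟨hbot y, fun u _ hle => hmax u trivial hle⟩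
  have hYeq : Y = maxSet (Set.Ici b) := (h1 bot Y hY hYbot).2
  have hbase : ∀ W' : Set X, W'.Nonempty → W' ⊆ Y → b ≤ s bot W' :=
    fun W' hne hsub => h2 bot W' Y hne hY (hsub.trans hYbot) hYbot hsub
  -- main computation lemma for skelLift
  have main : ∀ (z : Set.Ici b) (W : Set (Set.Ici b)), W.Nonempty →
      (Subtype.val '' W) ⊆ maxSet (Set.Ici (z : X)) →
      (z : X) ≤ (skelLift bot s b z W : X) ∧
      Subtype.val '' W = maxSet (Set.Ici ((skelLift bot s b z W : X))) ∧
      (skelLift bot s b z W : X) =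
        (if (z : X) = b then s bot (Subtype.val '' W) else s (z : X) (Subtype.val '' W)) := by
    intro z W hne hsub
    have hW'ne : (Subtype.val '' W).Nonempty := hne.image _
    by_cases hz : (z : X) = b
    · have hsubY : Subtype.val '' W ⊆ Y := by
        rw [hYeq]; rw [hz] at hsub; exact hsub
      have hW'bot : Subtype.val '' W ⊆ maxSet (Set.Ici bot) := hsubY.trans hYbot
      obtain ⟨-, hb2⟩ := h1 bot (Subtype.val '' W) hW'ne hW'bot
      have hv : b ≤ s bot (Subtype.val '' W) := hbase _ hW'ne hsubY
      have hval : (skelLift bot s b z W : X) = s bot (Subtype.val '' W) := by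
        simp only [skelLift, hz, if_pos, dif_pos hv]
      refine ⟨?_, ?_, ?_⟩
      · rw [hval, hz]; exact hv
      · rw [hval]; exact hb2
      · rw [hval, if_pos hz]
    · obtain ⟨hz1, hz2⟩ := h1 (z : X) (Subtype.val '' W) hW'ne hsub
      have hv : b ≤ s (z : X) (Subtype.val '' W) := le_trans z.2 hz1
      have hval : (skelLift bot s b z W : X) = s (z : X) (Subtype.val '' W) := by
        simp only [skelLift, hz, if_neg, if_false, dif_pos hv]
      refine ⟨?_, ?_, ?_⟩
      · rw [hval]; exact hz1
      · rw [hval]; exact hz2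
      · rw [hval, if_neg hz]
  refine ⟨⟨b, le_refl b⟩, skelLift bot s b, fun z => z.2, ?_, ?_, ?_⟩
  · -- condition (i)
    intro z W hne hsub
    have hsub' : Subtype.val '' W ⊆ maxSet (Set.Ici (z : X)) := by
      rintro _ ⟨w, hw, rfl⟩
      exact (mem_maxSet_Ici_subtype z w).1 (hsub hw)
    obtain ⟨hle, heq, -⟩ := main z W hne hsub'
    refine ⟨hle, ?_⟩
    ext w
    rw [mem_maxSet_Ici_subtype, ← heq, Subtype.val_injective.mem_set_image]
  · -- condition (ii)
    intro z W Z hWne hZne hWsub hZsub hWZ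
    have hWsub' : Subtype.val '' W ⊆ maxSet (Set.Ici (z : X)) := by
      rintro _ ⟨w, hw, rfl⟩
      exact (mem_maxSet_Ici_subtype z w).1 (hWsub hw)
    have hZsub' : Subtype.val '' Z ⊆ maxSet (Set.Ici (z : X)) := by
      rintro _ ⟨w, hw, rfl⟩
      exact (mem_maxSet_Ici_subtype z w).1 (hZsub hw)
    obtain ⟨-, -, hWval⟩ := main z W hWne hWsub'
    obtain ⟨-, -, hZval⟩ := main z Z hZne hZsub'
    have hWZ' : Subtype.val '' W ⊆ Subtype.val '' Z := Set.image_mono (f := Subtype.val) hWZ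
    rw [← Subtype.coe_le_coe, hWval, hZval]
    by_cases hz : (z : X) = b
    · rw [if_pos hz, if_pos hz]
      have hsubY : Subtype.val '' Z ⊆ Y := by
        rw [hYeq]; rw [hz] at hZsub'; exact hZsub'
      exact h2 bot (Subtype.val '' W) (Subtype.val '' Z) (hWne.image _) (hZne.image _)
        ((hWZ'.trans hsubY).trans hYbot) (hsubY.trans hYbot) hWZ'
    · rw [if_neg hz, if_neg hz]
      exact h2 (z : X) (Subtype.val '' W) (Subtype.val '' Z) (hWne.image _) (hZne.image _)
        hWsub' hZsub' hWZ'
  · -- condition (iii)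
    intro x W hne hWmax hmaxsub
    have hW'Y : Subtype.val '' W ⊆ Y := by
      rintro _ ⟨w, hw, rfl⟩
      rw [hYeq]
      exact (mem_maxSet_univ_subtype w).1 (hWmax hw)
    have hsub' : Subtype.val '' W ⊆
        maxSet (Set.Ici ((⟨b, le_refl b⟩ : Set.Ici b) : X)) := by
      rw [hYeq] at hW'Y; exact hW'Y
    obtain ⟨-, -, hval⟩ := main ⟨b, le_refl b⟩ W hne hsub'
    rw [if_pos rfl] at hval
    have hmaxsub' : maxSet (Set.Ici (x : X)) ⊆ Subtype.val '' W := by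
      intro w' hw'
      have hw'b : b ≤ w' := le_trans x.2 hw'.1
      have hmem : (⟨w', hw'b⟩ : Set.Ici b) ∈ maxSet (Set.Ici x) :=
        (mem_maxSet_Ici_subtype x ⟨w', hw'b⟩).2 hw'
      exact ⟨_, hmaxsub hmem, rfl⟩
    rw [← Subtype.coe_le_coe, hval]
    exact h3 (x : X) (Subtype.val '' W) (hne.image _) (hW'Y.trans hYmax) hmaxsub'
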